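/- Let P = k[x_0,…,x_n] and let f ∈ P be a nonzero homogeneous polynomial with hypersurface ring R = P/(f). Let (φ, ψ) be a graded matrix factorization of f with φ : L_1 → L_0 between graded free P-modules of rank m, and let M = coker φ regarded as an R-module. Then M is annihilated by f, and over R the module M has the 2-periodic free resolution ⋯ → R^m →^{ψ̄} R^m →^{φ̄} R^m → M → 0; consequently the syzygy module Ω_R(M) = coker ψ̄ satisfies Ω_R(Ω_R(M)) ≅ M (up to shift), i.e., M is its own second syzygy. -/

import Mathlib

set_option synthInstance.maxHeartbeats 1000000
set_option maxHeartbeats 1000000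

open Matrix


private lemma mf_ker_eq_range {k : Type*} [Field k] {n m : ℕ}
    {f : MvPolynomial (Fin (n + 1)) k} (hf : f ≠ 0)
    (A B : Matrix (Fin m) (Fin m) (MvPolynomial (Fin (n + 1)) k))
    (hAB : A * B = f • (1 : Matrix (Fin m) (Fin m) (MvPolynomial (Fin (n + 1)) k)))
    (hBA : B * A = f • (1 : Matrix (Fin m) (Fin m) (MvPolynomial (Fin (n + 1)) k))) :
    LinearMap.ker ((A.map (Ideal.Quotient.mk (Ideal.span {f}))).mulVecLin) =
    LinearMap.range ((B.map (Ideal.Quotient.mk (Ideal.span {f}))).mulVecLin) := by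
  set mk := Ideal.Quotient.mk (Ideal.span {f}) with hmk
  ext v
  constructor
  · intro hv
    -- lift v
    choose w hw' using fun i => Ideal.Quotient.mk_surjective (v i)
    have hw : mk ∘ w = v := funext hw'
    -- entries of A *ᵥ w are divisible by f
    have hdiv : ∀ i, f ∣ (A *ᵥ w) i := by
      intro i
      rw [← Ideal.mem_span_singleton, ← Ideal.Quotient.eq_zero_iff_mem]
      have : mk ((A *ᵥ w) i) = ((A.map mk) *ᵥ (mk ∘ w)) i := RingHom.map_mulVec mk A w i
      rw [this, hw]
      exact congrFun (LinearMap.mem_ker.mp hv) i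
    choose c hc using hdiv
    have key : A *ᵥ w = f • c := funext fun i => by rw [Pi.smul_apply, smul_eq_mul, hc i]
    have : f • (B *ᵥ c) = f • w := by
      have : B *ᵥ (A *ᵥ w) = f • w := by
        rw [Matrix.mulVec_mulVec, hBA]
        ext i; simp [Matrix.smul_mulVec]
      rw [key] at this
      rw [← this, Matrix.mulVec_smul]
    have hcw : B *ᵥ c = w := by
      funext i
      have := congrFun this i
      simp only [Pi.smul_apply, smul_eq_mul] at this
      exact mul_left_cancel₀ hf this
    refine ⟨mk ∘ c, ?_⟩
    rw [Matrix.mulVecLin_apply, ← hw, ← hcw]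
    funext i
    exact (RingHom.map_mulVec mk B c i).symm
  · rintro ⟨u, rfl⟩
    rw [LinearMap.mem_ker, Matrix.mulVecLin_apply, Matrix.mulVecLin_apply,
      Matrix.mulVec_mulVec, ← Matrix.map_mul, hAB]
    funext i
    simp only [Matrix.mulVec, dotProduct, Matrix.map_apply, Matrix.smul_apply,
      smul_eq_mul]
    have hf0 : mk f = 0 := Ideal.Quotient.eq_zero_iff_mem.mpr (Ideal.mem_span_singleton_self f)
    simp [hf0]

/-- Eisenbud's 2-periodicity over a hypersurface ring: let `P = k[x₀,…,xₙ]`,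
`f` nonzero homogeneous, `R = P/(f)`, and `(φ, ψ)` an `m × m` matrix factorization of
`f` (`φψ = ψφ = f·I`). Let `M = coker φ̄` over `R`. Then `M` is annihilated by `f`,
the 2-periodic complex `⋯ → R^m →^ψ̄ R^m →^φ̄ R^m → M → 0` is exact, and the second
syzygy of `M` (namely `ker φ̄ = im ψ̄`) is isomorphic to `M` itself. -/
theorem hypersurface_two_periodicity (k : Type*) [Field k] (n m : ℕ)
    (f : MvPolynomial (Fin (n + 1)) k) (hf : f ≠ 0) (d : ℕ) (hhom : f.IsHomogeneous d)
    (φ ψ : Matrix (Fin m) (Fin m) (MvPolynomial (Fin (n + 1)) k))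
    (h1 : φ * ψ = f • (1 : Matrix (Fin m) (Fin m) (MvPolynomial (Fin (n + 1)) k)))
    (h2 : ψ * φ = f • (1 : Matrix (Fin m) (Fin m) (MvPolynomial (Fin (n + 1)) k))) :
    (∀ x : (Fin m → MvPolynomial (Fin (n + 1)) k ⧸ Ideal.span {f}) ⧸
        LinearMap.range ((φ.map (Ideal.Quotient.mk (Ideal.span {f}))).mulVecLin),
      (Ideal.Quotient.mk (Ideal.span {f}) f) • x = 0) ∧
    Function.Exact ((ψ.map (Ideal.Quotient.mk (Ideal.span {f}))).mulVecLin)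
      ((φ.map (Ideal.Quotient.mk (Ideal.span {f}))).mulVecLin) ∧
    Nonempty
      (↥(LinearMap.range ((ψ.map (Ideal.Quotient.mk (Ideal.span {f}))).mulVecLin))
        ≃ₗ[MvPolynomial (Fin (n + 1)) k ⧸ Ideal.span {f}]
       ((Fin m → MvPolynomial (Fin (n + 1)) k ⧸ Ideal.span {f}) ⧸
        LinearMap.range ((φ.map (Ideal.Quotient.mk (Ideal.span {f}))).mulVecLin))) := by
  have hf0 : Ideal.Quotient.mk (Ideal.span {f}) f = 0 :=
    Ideal.Quotient.eq_zero_iff_mem.mpr (Ideal.mem_span_singleton_self f)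
  refine ⟨fun x => by rw [hf0]; exact zero_smul (MvPolynomial (Fin (n + 1)) k ⧸ Ideal.span {f}) x, ?_, ?_⟩
  · exact LinearMap.exact_iff.mpr (mf_ker_eq_range hf φ ψ h1 h2)
  · have h := mf_ker_eq_range hf ψ φ h2 h1
    exact ⟨(LinearMap.quotKerEquivRange
        ((ψ.map (Ideal.Quotient.mk (Ideal.span {f}))).mulVecLin)).symm.trans
      (Submodule.quotEquivOfEq _ _ h)⟩
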